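/- arXiv:1302.6672 — 2 statements merged into one kernel-verified Lean document; each statement's English description precedes it below -/
import Mathlib

section
/- Let ρ, T₀ > 0 be constants, let u : ℝ² → ℝ be C², and let T : ℝ² → ℝ be positive and differentiable in x. Suppose that for all (x,t): (i) ρ u_{tt} = ∂/∂x [ T(x,t) · u_x/√(1+u_x²) ] (vertical component of Newton's law); (ii) ∂/∂x [ T(x,t) · 1/√(1+u_x²) ] = 0 (horizontal component of Newton's law); and (iii) T(0,t) = T₀ √(1 + u_x(0,t)²). Then u satisfies exactly the linear wave equation u_{tt} = c² u_{xx} with c² = T₀/ρ. -/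
/-- main 1-D result: if the vertical and horizontal components
of Newton's law hold, with tension normalized by `T(0,t) = T₀√(1+u_x(0,t)²)`,
then `u` satisfies exactly the linear wave equation `u_{tt} = (T₀/ρ) u_{xx}`. -/
theorem transverse_string_exactly_linear_wave
    (ρ T₀ : ℝ) (hρ : 0 < ρ) (hT₀ : 0 < T₀)
    (u : ℝ × ℝ → ℝ) (hu : ContDiff ℝ 2 u)
    (T : ℝ × ℝ → ℝ) (hTpos : ∀ x t : ℝ, 0 < T (x, t))
    (hTdiff : ∀ x t : ℝ, DifferentiableAt ℝ (fun s => T (s, t)) x)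
    (hvert : ∀ x t : ℝ,
      ρ * deriv (deriv (fun s => u (x, s))) t =
        deriv (fun r =>
          T (r, t) * (deriv (fun s => u (s, t)) r /
            Real.sqrt (1 + (deriv (fun s => u (s, t)) r) ^ 2))) x)
    (hhoriz : ∀ x t : ℝ,
      deriv (fun r =>
        T (r, t) * (1 / Real.sqrt (1 + (deriv (fun s => u (s, t)) r) ^ 2))) x = 0)
    (hT0 : ∀ t : ℝ,
      T (0, t) = T₀ * Real.sqrt (1 + (deriv (fun s => u (s, t)) 0) ^ 2)) :
    ∀ x t : ℝ,
      deriv (deriv (fun s => u (x, s))) t =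
        (T₀ / ρ) * deriv (deriv (fun s => u (s, t))) x := by
  intro x t
  set v : ℝ → ℝ := deriv (fun s => u (s, t)) with hvdef
  have hv : Differentiable ℝ v := by
    have h : ContDiff ℝ 2 (fun s => u (s, t)) := hu.comp (contDiff_id.prodMk contDiff_const)
    rw [show (2 : WithTop ℕ∞) = 1 + 1 from rfl, contDiff_succ_iff_deriv] at h
    exact h.2.2.differentiable one_ne_zero
  have hpos : ∀ r : ℝ, 0 < 1 + v r ^ 2 := fun r => by positivity
  have hsq : ∀ r : ℝ, 0 < Real.sqrt (1 + v r ^ 2) := fun r => Real.sqrt_pos.mpr (hpos r)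
  have hsqdiff : Differentiable ℝ (fun r => Real.sqrt (1 + v r ^ 2)) := fun r =>
    (((differentiable_const 1).add (hv.pow 2)) r).sqrt (ne_of_gt (hpos r))
  have hg : Differentiable ℝ (fun r => T (r, t) * (1 / Real.sqrt (1 + v r ^ 2))) := fun r =>
    (hTdiff r t).mul (((differentiable_const 1).div hsqdiff
      (fun r => (hsq r).ne')) r)
  have hconst : ∀ r : ℝ, T (r, t) * (1 / Real.sqrt (1 + v r ^ 2)) = T₀ := by
    intro r
    have := is_const_of_deriv_eq_zero hg (fun r => hhoriz r t) r 0
    rw [this, hT0 t]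
    rw [mul_one_div, mul_div_assoc, div_self (hsq 0).ne', mul_one]
  have hTval : ∀ r : ℝ, T (r, t) = T₀ * Real.sqrt (1 + v r ^ 2) := by
    intro r
    have h := hconst r
    field_simp at h
    linarith [h]
  have hfun : (fun r => T (r, t) * (v r / Real.sqrt (1 + v r ^ 2))) =
      fun r => T₀ * v r := by
    funext r
    rw [hTval r]
    field_simp
  have hd : deriv (fun r => T (r, t) * (v r / Real.sqrt (1 + v r ^ 2))) x =
      T₀ * deriv v x := by
    rw [hfun, deriv_const_mul T₀ (hv x)]
  have hV := hvert x t
  rw [hd] at hV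
  field_simp
  linarith [hV]
end

section
/- Let a < b and let u : ℝ² → ℝ, (m,t) ↦ u(m,t), be C² and satisfy u_{tt} = u_{mm} everywhere, with boundary conditions u(a,t) = u(b,t) = 0 for all t and zero initial velocity u_t(m,0) = 0 for all m ∈ [a,b]. Then u is time-periodic on the strip with period 2(b−a): for all m ∈ [a,b] and all t ∈ ℝ, u(m, t + 2(b−a)) = u(m,t). -/
/-- a C² solution of `u_{tt} = u_{mm}` on the strip
`[a,b] × ℝ` with fixed zero endpoints and zero initial velocity is
time-periodic with period `2(b−a)`. -/
theorem fixed_endpoint_wave_periodic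
    (a b : ℝ) (hab : a < b)
    (u : ℝ × ℝ → ℝ) (hu : ContDiff ℝ 2 u)
    (hwave : ∀ m t : ℝ,
      deriv (deriv (fun s => u (m, s))) t = deriv (deriv (fun r => u (r, t))) m)
    (hbdry : ∀ t : ℝ, u (a, t) = 0 ∧ u (b, t) = 0)
    (hvel : ∀ m ∈ Set.Icc a b, deriv (fun s => u (m, s)) 0 = 0) :
    ∀ m ∈ Set.Icc a b, ∀ t : ℝ, u (m, t + 2 * (b - a)) = u (m, t) := by
  set f' : ℝ × ℝ → (ℝ × ℝ →L[ℝ] ℝ) := fderiv ℝ u with hf'def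
  have hdiff : Differentiable ℝ u := hu.differentiable (by norm_num)
  have hf'C1 : ContDiff ℝ 1 f' := hu.fderiv_right (by norm_num)
  have hf'diff : Differentiable ℝ f' := hf'C1.differentiable (by norm_num)
  set f'' : ℝ × ℝ → (ℝ × ℝ →L[ℝ] ℝ × ℝ →L[ℝ] ℝ) := fun p => fderiv ℝ f' p with hf''def
  have hf'at : ∀ p, HasFDerivAt u (f' p) p := fun p => (hdiff p).hasFDerivAt
  have hf''at : ∀ p, HasFDerivAt f' (f'' p) p := fun p => (hf'diff p).hasFDerivAt
  have hsymm : ∀ p v w, f'' p v w = f'' p w v := fun p =>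
    second_derivative_symmetric hf'at (hf''at p)
  -- second derivatives of the slices
  have hline_t : ∀ m t : ℝ, HasDerivAt (fun s : ℝ => ((m, s) : ℝ × ℝ)) (0, 1) t :=
    fun m t => (hasDerivAt_const t m).prodMk (hasDerivAt_id t)
  have hline_m : ∀ m t : ℝ, HasDerivAt (fun r : ℝ => ((r, t) : ℝ × ℝ)) (1, 0) m :=
    fun m t => (hasDerivAt_id m).prodMk (hasDerivAt_const m t)
  have hslice_tt : ∀ m t : ℝ, deriv (deriv (fun s => u (m, s))) t
      = f'' (m, t) (0, 1) (0, 1) := by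
    intro m t
    have h1 : deriv (fun s => u (m, s)) = fun s => f' (m, s) (0, 1) :=
      funext fun s => ((hf'at (m, s)).comp_hasDerivAt s (hline_t m s)).deriv
    rw [h1]
    have h2 : HasDerivAt (fun s : ℝ => f' (m, s)) (f'' (m, t) (0, 1)) t :=
      (hf''at (m, t)).comp_hasDerivAt t (hline_t m t)
    have h3 := h2.clm_apply (hasDerivAt_const t (((0 : ℝ), (1 : ℝ)) : ℝ × ℝ))
    simp only [map_zero, add_zero] at h3
    exact h3.deriv
  have hslice_mm : ∀ m t : ℝ, deriv (deriv (fun r => u (r, t))) m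
      = f'' (m, t) (1, 0) (1, 0) := by
    intro m t
    have h1 : deriv (fun r => u (r, t)) = fun r => f' (r, t) (1, 0) :=
      funext fun r => ((hf'at (r, t)).comp_hasDerivAt r (hline_m r t)).deriv
    rw [h1]
    have h2 : HasDerivAt (fun r : ℝ => f' (r, t)) (f'' (m, t) (1, 0)) m :=
      (hf''at (m, t)).comp_hasDerivAt m (hline_m m t)
    have h3 := h2.clm_apply (hasDerivAt_const m (((1 : ℝ), (0 : ℝ)) : ℝ × ℝ))
    simp only [map_zero, add_zero] at h3
    exact h3.deriv
  have hwave' : ∀ p : ℝ × ℝ, f'' p (0, 1) (0, 1) = f'' p (1, 0) (1, 0) := by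
    rintro ⟨m, t⟩
    have := hwave m t
    rwa [hslice_tt, hslice_mm] at this
  -- the derivative along (1,1) annihilated by derivative along (1,-1)
  have hchar : ∀ p : ℝ × ℝ, f'' p (1, -1) (1, 1) = 0 := by
    intro p
    have e1 : (((1 : ℝ), (-1 : ℝ)) : ℝ × ℝ) = ((1 : ℝ), (0 : ℝ)) - ((0 : ℝ), (1 : ℝ)) := by
      simp [Prod.ext_iff]
    have e2 : (((1 : ℝ), (1 : ℝ)) : ℝ × ℝ) = ((1 : ℝ), (0 : ℝ)) + ((0 : ℝ), (1 : ℝ)) := by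
      simp [Prod.ext_iff]
    rw [e1, e2]
    simp only [map_add, map_sub, ContinuousLinearMap.sub_apply, ContinuousLinearMap.add_apply]
    rw [hwave' p, hsymm p (0, 1) (1, 0)]
    ring
  -- constancy of the (1,1)-derivative along characteristics
  have hk : ∀ (p : ℝ × ℝ) (s : ℝ), f' (p.1 + s, p.2 - s) (1, 1) = f' p (1, 1) := by
    intro p s
    have hqd : ∀ s : ℝ, HasDerivAt (fun s : ℝ => ((p.1 + s, p.2 - s) : ℝ × ℝ)) (1, -1) s := by
      intro s
      have h1 : HasDerivAt (fun s : ℝ => p.1 + s) 1 s := by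
        simpa using (hasDerivAt_id s).const_add p.1
      have h2 : HasDerivAt (fun s : ℝ => p.2 - s) (-1) s := by
        simpa using (hasDerivAt_id s).const_sub p.2
      exact h1.prodMk h2
    have hK : ∀ s : ℝ, HasDerivAt (fun s : ℝ => f' (p.1 + s, p.2 - s) (1, 1)) 0 s := by
      intro s
      have h2 : HasDerivAt (fun s : ℝ => f' (p.1 + s, p.2 - s))
          (f'' (p.1 + s, p.2 - s) (1, -1)) s :=
        (hf''at _).comp_hasDerivAt s (hqd s)
      have h3 := h2.clm_apply (hasDerivAt_const s (((1 : ℝ), (1 : ℝ)) : ℝ × ℝ))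
      simp only [map_zero, add_zero] at h3
      rwa [hchar (p.1 + s, p.2 - s)] at h3
    have hconst := is_const_of_deriv_eq_zero
      (f := fun s : ℝ => f' (p.1 + s, p.2 - s) (1, 1))
      (fun s => (hK s).differentiableAt) (fun s => (hK s).deriv) s 0
    simpa using hconst
  -- d'Alembert splitting
  have key : ∀ x y : ℝ, u ((x + y) / 2, (x - y) / 2) - u (x / 2, x / 2)
      = u (y / 2, -(y / 2)) - u (0, 0) := by
    intro x y
    have hd : ∀ x : ℝ, HasDerivAt
        (fun x : ℝ => u ((x + y) / 2, (x - y) / 2) - u (x / 2, x / 2)) 0 x := by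
      intro x
      have l1 : HasDerivAt (fun x : ℝ => (((x + y) / 2, (x - y) / 2) : ℝ × ℝ))
          ((1 : ℝ) / 2, (1 : ℝ) / 2) x :=
        (((hasDerivAt_id x).add_const y).div_const 2).prodMk
          (((hasDerivAt_id x).sub_const y).div_const 2)
      have l2 : HasDerivAt (fun x : ℝ => ((x / 2, x / 2) : ℝ × ℝ))
          ((1 : ℝ) / 2, (1 : ℝ) / 2) x :=
        ((hasDerivAt_id x).div_const 2).prodMk ((hasDerivAt_id x).div_const 2)
      have d1 : HasDerivAt (fun x : ℝ => u ((x + y) / 2, (x - y) / 2))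
          (f' ((x + y) / 2, (x - y) / 2) ((1 : ℝ) / 2, (1 : ℝ) / 2)) x :=
        (hf'at _).comp_hasDerivAt x l1
      have d2 : HasDerivAt (fun x : ℝ => u (x / 2, x / 2))
          (f' (x / 2, x / 2) ((1 : ℝ) / 2, (1 : ℝ) / 2)) x :=
        (hf'at _).comp_hasDerivAt x l2
      have hsub := d1.sub d2
      have heq : f' ((x + y) / 2, (x - y) / 2) (((1 : ℝ) / 2, (1 : ℝ) / 2))
          - f' (x / 2, x / 2) (((1 : ℝ) / 2, (1 : ℝ) / 2)) = 0 := by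
        have hs : (((1 : ℝ) / 2, (1 : ℝ) / 2) : ℝ × ℝ)
            = ((1 : ℝ) / 2) • (((1 : ℝ), (1 : ℝ)) : ℝ × ℝ) := by
          simp [Prod.ext_iff]
        rw [hs, map_smul, map_smul,
          show ((x + y) / 2 : ℝ) = x / 2 + y / 2 from by ring,
          show ((x - y) / 2 : ℝ) = x / 2 - y / 2 from by ring,
          hk (x / 2, x / 2) (y / 2), sub_self]
      rwa [heq] at hsub
    have hconst := is_const_of_deriv_eq_zero
      (f := fun x : ℝ => u ((x + y) / 2, (x - y) / 2) - u (x / 2, x / 2))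
      (fun x => (hd x).differentiableAt) (fun x => (hd x).deriv) x 0
    calc u ((x + y) / 2, (x - y) / 2) - u (x / 2, x / 2)
        = u ((0 + y) / 2, (0 - y) / 2) - u (0 / 2, 0 / 2) := hconst
      _ = u (y / 2, -(y / 2)) - u (0, 0) := by
          rw [show ((0:ℝ) - y) / 2 = -(y / 2) from by ring, zero_add, zero_div]
  -- representation u(m,t) = S(m+t) + R(m-t) - u(0,0)
  set S : ℝ → ℝ := fun z => u (z / 2, z / 2) with hSdef
  set R : ℝ → ℝ := fun z => u (z / 2, -(z / 2)) with hRdef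
  have rep : ∀ m t : ℝ, u (m, t) = S (m + t) + (R (m - t) - u (0, 0)) := by
    intro m t
    have h := key (m + t) (m - t)
    rw [show ((m + t) + (m - t)) / 2 = m from by ring,
      show ((m + t) - (m - t)) / 2 = t from by ring] at h
    simp only [hSdef, hRdef]
    linarith
  have hR : ∀ s : ℝ, R s = u (0, 0) - S (2 * a - s) := by
    intro s
    have h := rep a (a - s)
    rw [(hbdry (a - s)).1, show a + (a - s) = 2 * a - s from by ring,
      show a - (a - s) = s from by ring] at h
    linarith
  have hSstep : ∀ t : ℝ, S (b + t) = S (2 * a - b + t) := by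
    intro t
    have h := rep b t
    rw [(hbdry t).2, hR (b - t), show 2 * a - (b - t) = 2 * a - b + t from by ring] at h
    linarith
  have hper : ∀ z : ℝ, S (z + 2 * (b - a)) = S z := by
    intro z
    have h := hSstep (z + b - 2 * a)
    rwa [show b + (z + b - 2 * a) = z + 2 * (b - a) from by ring,
      show 2 * a - b + (z + b - 2 * a) = z from by ring] at h
  intro m _ t
  rw [rep m (t + 2 * (b - a)), rep m t, hR (m - (t + 2 * (b - a))), hR (m - t),
    show m + (t + 2 * (b - a)) = (m + t) + 2 * (b - a) from by ring,
    show 2 * a - (m - (t + 2 * (b - a))) = (2 * a - (m - t)) + 2 * (b - a) from by ring,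
    hper (m + t), hper (2 * a - (m - t))]
end
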